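/- For every compact interval [θ₋, θ₊] ⊂ ℝ there exists a constant C > 0 such that for every θ ∈ [θ₋, θ₊] and every ν ∈ (0,1], the first basis function 𝐔₁^{θ,ν} = (U₁, V₁, W₁) satisfies ‖U₁‖_{L^∞(-L,H)} + ‖V₁‖_{L^∞(-L,H)} + ‖W₁‖_{L^∞(-L,H)} ≤ C; in particular the bound is uniform in ν. -/

import Mathlib

open Complex

set_option maxHeartbeats 2000000
open Set MeasureTheory intervalIntegral

lemma core_gronwall {b r K1 K2 : ℝ} (hb : 0 < b) (hr : 0 < r) (hK1 : 0 ≤ K1) (hK2 : 0 ≤ K2)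
    {v w u z dv dw dz : ℝ → ℂ}
    (hv : ∀ x ∈ Icc 0 b, HasDerivAt v (dv x) x)
    (hw : ∀ x ∈ Icc 0 b, HasDerivAt w (dw x) x)
    (hz : ∀ x ∈ Icc 0 b, HasDerivAt z (dz x) x)
    (hcv : ContinuousOn dv (Icc 0 b))
    (hcw : ContinuousOn dw (Icc 0 b))
    (hcz : ContinuousOn dz (Icc 0 b))
    (hz0 : z 0 = 0) (hu0 : u 0 = 0)
    (hdz : ∀ x ∈ Icc 0 b, ‖dz x‖ ≤ K1 * (‖v x‖ + ‖w x‖))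
    (hu : ∀ x ∈ Icc 0 b, r * x * ‖u x‖ ≤ ‖z x‖)
    (hdv : ∀ x ∈ Icc 0 b, ‖dv x‖ ≤ K2 * (‖v x‖ + ‖w x‖) + K2 * ‖u x‖)
    (hdw : ∀ x ∈ Icc 0 b, ‖dw x‖ ≤ K2 * (‖v x‖ + ‖w x‖) + K2 * ‖u x‖) :
    ∀ x ∈ Icc 0 b, ‖v x‖ + ‖w x‖ + ‖u x‖ ≤
      (1 + K1 / r) * Real.exp ((2 * K2 + 2 * K2 * K1 / r) * b) * (‖v 0‖ + ‖w 0‖) := by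
  have hvC : ContinuousOn v (Icc 0 b) := fun x hx => (hv x hx).continuousAt.continuousWithinAt
  have hwC : ContinuousOn w (Icc 0 b) := fun x hx => (hw x hx).continuousAt.continuousWithinAt
  set φ : ℝ → ℝ := fun x => ‖v x‖ + ‖w x‖ with hφdef
  have hφc : ContinuousOn φ (Icc 0 b) := hvC.norm.add hwC.norm
  have hφ0 : ∀ x, 0 ≤ φ x := fun x => add_nonneg (norm_nonneg _) (norm_nonneg _)
  set cl : ℝ → ℝ := fun x => max 0 (min x b) with hcldef
  have hclmem : ∀ x, cl x ∈ Icc 0 b := fun x =>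
    ⟨le_max_left _ _, max_le hb.le (min_le_right _ _)⟩
  have hclc : Continuous cl := continuous_const.max (continuous_id.min continuous_const)
  have hclid : ∀ x ∈ Icc 0 b, cl x = x := fun x hx => by
    simp only [hcldef, min_eq_left hx.2, max_eq_right hx.1]
  have hphic : Continuous (fun x => φ (cl x)) := hφc.comp_continuous hclc hclmem
  set g : ℝ → ℝ := fun x => ∫ t in (0:ℝ)..x, φ (cl t) with hgdef
  have hg : ∀ x, HasDerivAt g (φ (cl x)) x := fun x =>
    (hphic.integral_hasStrictDerivAt 0 x).hasDerivAt
  have hg0 : g 0 = 0 := integral_same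
  set q : ℝ → ℝ := fun x => if x = 0 then φ 0 else g x / x with hqdef
  have hq0 : q 0 = φ 0 := if_pos rfl
  have hqx : ∀ x : ℝ, x ≠ 0 → q x = g x / x := fun x hx => if_neg hx
  have hcl0 : cl 0 = 0 := hclid 0 ⟨le_rfl, hb.le⟩
  -- continuity of q
  have hqcont : Continuous q := by
    rw [continuous_iff_continuousAt]
    intro x
    by_cases hx : x = 0
    · subst hx
      rw [← continuousWithinAt_compl_self]
      have h1 : Filter.Tendsto (fun y => g y / y) (nhdsWithin 0 {(0:ℝ)}ᶜ) (nhds (φ (cl 0))) := by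
        have := (hg 0)
        rw [hasDerivAt_iff_tendsto_slope] at this
        refine this.congr ?_
        intro y
        simp [slope_def_field, hg0]
      have heq : ∀ y ∈ ({(0:ℝ)}ᶜ : Set ℝ), q y = g y / y := fun y hy => hqx y hy
      unfold ContinuousWithinAt
      rw [hcl0] at h1
      rw [hq0]
      refine h1.congr' ?_
      exact Filter.eventuallyEq_of_mem self_mem_nhdsWithin (fun y hy => (hqx y hy).symm)
    · have hgy : ContinuousAt (fun y => g y / y) x :=
        ((hg x).continuousAt).div continuousAt_id hx
      refine hgy.congr ?_
      have : ∀ᶠ y in nhds x, y ≠ 0 := eventually_ne_nhds hx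
      exact this.mono fun y hy => (hqx y hy).symm
  have hgnn : ∀ x ∈ Icc 0 b, 0 ≤ g x := fun x hx =>
    intervalIntegral.integral_nonneg hx.1 fun t _ => hφ0 _
  have hqnn : ∀ x ∈ Icc 0 b, 0 ≤ q x := by
    intro x hx
    rcases eq_or_ne x 0 with h | h
    · rw [h, hq0]; exact hφ0 0
    · rw [hqx x h]; exact div_nonneg (hgnn x hx) hx.1
  -- claim1 : ‖z x‖ ≤ K1 * g x
  have claim1 : ∀ x ∈ Icc 0 b, ‖z x‖ ≤ K1 * g x := by
    intro x hx
    have hsub : Icc 0 x ⊆ Icc 0 b := Icc_subset_Icc le_rfl hx.2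
    have huI : uIcc 0 x = Icc 0 x := uIcc_of_le hx.1
    have hczx : ContinuousOn dz (uIcc 0 x) := by rw [huI]; exact hcz.mono hsub
    have hftc : (∫ t in (0:ℝ)..x, dz t) = z x - z 0 :=
      integral_eq_sub_of_hasDerivAt (fun t ht => hz t (hsub (huI ▸ ht)))
        hczx.intervalIntegrable
    have h1 : ‖z x‖ = ‖∫ t in (0:ℝ)..x, dz t‖ := by rw [hftc, hz0, sub_zero]
    rw [h1]
    calc ‖∫ t in (0:ℝ)..x, dz t‖ ≤ ∫ t in (0:ℝ)..x, ‖dz t‖ :=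
          intervalIntegral.norm_integral_le_integral_norm hx.1
      _ ≤ ∫ t in (0:ℝ)..x, K1 * φ (cl t) := by
          refine intervalIntegral.integral_mono_on hx.1 ?_ ?_ ?_
          · exact (hczx.norm).intervalIntegrable
          · exact ((continuous_const.mul hphic).continuousOn).intervalIntegrable
          · intro t ht
            rw [hclid t (hsub ht)]
            exact hdz t (hsub ht)
      _ = K1 * g x := by rw [hgdef]; exact intervalIntegral.integral_const_mul _ _
  -- claim2 : ‖u x‖ ≤ (K1/r) * q x
  have claim2 : ∀ x ∈ Icc 0 b, ‖u x‖ ≤ K1 / r * q x := by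
    intro x hx
    rcases eq_or_lt_of_le hx.1 with h0 | h0
    · rw [← h0, hu0, norm_zero]
      exact mul_nonneg (div_nonneg hK1 hr.le) (hqnn 0 ⟨le_rfl, hb.le⟩)
    · have hq : q x = g x / x := hqx x (ne_of_gt h0)
      have h2 : r * x * ‖u x‖ ≤ K1 * g x := (hu x hx).trans (claim1 x hx)
      have hrx : 0 < r * x := mul_pos hr h0
      rw [hq, div_mul_div_comm]
      rw [le_div_iff₀ hrx]
      calc ‖u x‖ * (r * x) = r * x * ‖u x‖ := by ring
        _ ≤ K1 * g x := h2
  -- the majorant h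
  set c2 : ℝ := 2 * K2 with hc2
  set c3 : ℝ := 2 * K2 * K1 / r with hc3
  have hc2nn : 0 ≤ c2 := by positivity
  have hc3nn : 0 ≤ c3 := by positivity
  set ρ : ℝ → ℝ := fun t => c2 * φ (cl t) + c3 * q t with hρdef
  have hρc : Continuous ρ := (continuous_const.mul hphic).add (continuous_const.mul hqcont)
  have hρnn : ∀ t ∈ Icc 0 b, 0 ≤ ρ t := fun t ht =>
    add_nonneg (mul_nonneg hc2nn (hφ0 _)) (mul_nonneg hc3nn (hqnn t ht))
  set h : ℝ → ℝ := fun x => φ 0 + ∫ t in (0:ℝ)..x, ρ t with hhdef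
  have hh : ∀ x, HasDerivAt h (ρ x) x := fun x =>
    ((hρc.integral_hasStrictDerivAt 0 x).hasDerivAt).const_add _
  have hh0 : h 0 = φ 0 := by simp [hhdef]
  have hhmono : ∀ s ∈ Icc 0 b, ∀ t ∈ Icc 0 b, s ≤ t → h s ≤ h t := by
    intro s hs t ht hst
    have h1 : (∫ u in (0:ℝ)..s, ρ u) + ∫ u in s..t, ρ u = ∫ u in (0:ℝ)..t, ρ u :=
      intervalIntegral.integral_add_adjacent_intervals
        (hρc.intervalIntegrable _ _) (hρc.intervalIntegrable _ _)
    have h2 : 0 ≤ ∫ u in s..t, ρ u :=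
      intervalIntegral.integral_nonneg hst fun u hu =>
        hρnn u ⟨hs.1.trans hu.1, hu.2.trans ht.2⟩
    simp only [hhdef]
    linarith [h1, h2]
  -- claim3 : φ ≤ h
  have claim3 : ∀ x ∈ Icc 0 b, φ x ≤ h x := by
    intro x hx
    have hsub : Icc 0 x ⊆ Icc 0 b := Icc_subset_Icc le_rfl hx.2
    have huI : uIcc 0 x = Icc 0 x := uIcc_of_le hx.1
    have hcvx : ContinuousOn dv (uIcc 0 x) := by rw [huI]; exact hcv.mono hsub
    have hcwx : ContinuousOn dw (uIcc 0 x) := by rw [huI]; exact hcw.mono hsub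
    have hv' : (∫ t in (0:ℝ)..x, dv t) = v x - v 0 :=
      integral_eq_sub_of_hasDerivAt (fun t ht => hv t (hsub (huI ▸ ht)))
        hcvx.intervalIntegrable
    have hw' : (∫ t in (0:ℝ)..x, dw t) = w x - w 0 :=
      integral_eq_sub_of_hasDerivAt (fun t ht => hw t (hsub (huI ▸ ht)))
        hcwx.intervalIntegrable
    have hvb : ‖v x‖ ≤ ‖v 0‖ + ∫ t in (0:ℝ)..x, ‖dv t‖ := by
      have : ‖v x - v 0‖ ≤ ∫ t in (0:ℝ)..x, ‖dv t‖ := by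
        rw [← hv']; exact intervalIntegral.norm_integral_le_integral_norm hx.1
      have h4 := norm_sub_norm_le (v x) (v 0)
      linarith
    have hwb : ‖w x‖ ≤ ‖w 0‖ + ∫ t in (0:ℝ)..x, ‖dw t‖ := by
      have : ‖w x - w 0‖ ≤ ∫ t in (0:ℝ)..x, ‖dw t‖ := by
        rw [← hw']; exact intervalIntegral.norm_integral_le_integral_norm hx.1
      have h4 := norm_sub_norm_le (w x) (w 0)
      linarith
    have hsum : (∫ t in (0:ℝ)..x, ‖dv t‖) + (∫ t in (0:ℝ)..x, ‖dw t‖)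
        = ∫ t in (0:ℝ)..x, (‖dv t‖ + ‖dw t‖) :=
      (intervalIntegral.integral_add (hcvx.norm.intervalIntegrable)
        (hcwx.norm.intervalIntegrable)).symm
    have hmono : (∫ t in (0:ℝ)..x, (‖dv t‖ + ‖dw t‖)) ≤ ∫ t in (0:ℝ)..x, ρ t := by
      refine intervalIntegral.integral_mono_on hx.1 ?_ ?_ ?_
      · exact (hcvx.norm.add hcwx.norm).intervalIntegrable
      · exact (hρc.continuousOn).intervalIntegrable
      · intro t ht
        have htb := hsub ht
        have h5 := hdv t htb
        have h6 := hdw t htb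
        have h7 := claim2 t htb
        have : ‖dv t‖ + ‖dw t‖ ≤ 2 * K2 * φ t + 2 * K2 * ‖u t‖ := by
          simp only [hφdef]; linarith
        refine this.trans ?_
        simp only [hρdef, hclid t htb, hc2, hc3]
        have h8 : 2 * K2 * ‖u t‖ ≤ 2 * K2 * (K1 / r * q t) :=
          mul_le_mul_of_nonneg_left h7 (by positivity)
        have h9 : 2 * K2 * (K1 / r * q t) = 2 * K2 * K1 / r * q t := by ring
        linarith
    simp only [hφdef] at hvb hwb ⊢
    simp only [hhdef, hφdef]
    linarith
  have hhnn : ∀ x ∈ Icc 0 b, 0 ≤ h x := fun x hx => (hφ0 x).trans (claim3 x hx)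
  -- claim4 : q ≤ h
  have claim4 : ∀ x ∈ Icc 0 b, q x ≤ h x := by
    intro x hx
    rcases eq_or_lt_of_le hx.1 with h0 | h0
    · rw [← h0, hq0, hh0]
    · have hq : q x = g x / x := hqx x (ne_of_gt h0)
      rw [hq, div_le_iff₀ h0]
      have : g x ≤ ∫ t in (0:ℝ)..x, h x := by
        refine intervalIntegral.integral_mono_on hx.1 ?_ ?_ ?_
        · exact hphic.continuousOn.intervalIntegrable
        · exact continuousOn_const.intervalIntegrable
        · intro t ht
          have htb : t ∈ Icc 0 b := ⟨ht.1, ht.2.trans hx.2⟩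
          rw [hclid t htb]
          exact (claim3 t htb).trans (hhmono t htb x hx ht.2)
      calc g x ≤ ∫ t in (0:ℝ)..x, h x := this
        _ = x * h x := by rw [intervalIntegral.integral_const, smul_eq_mul, sub_zero]
        _ = h x * x := by ring
  -- Gronwall
  set K : ℝ := c2 + c3 with hK
  have hKnn : 0 ≤ K := add_nonneg hc2nn hc3nn
  have hgron : ∀ x ∈ Icc 0 b, ‖h x‖ ≤ gronwallBound (‖v 0‖ + ‖w 0‖) K 0 (x - 0) := by
    refine norm_le_gronwallBound_of_norm_deriv_right_le
      (fun x hx => (hh x).continuousAt.continuousWithinAt)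
      (fun x _ => (hh x).hasDerivWithinAt) ?_ ?_
    · rw [hh0, Real.norm_of_nonneg (hφ0 0)]
    · intro x hx
      have hxI : x ∈ Icc 0 b := ⟨hx.1, hx.2.le⟩
      have h1 : ‖ρ x‖ = ρ x := Real.norm_of_nonneg (hρnn x hxI)
      have h2 : ‖h x‖ = h x := Real.norm_of_nonneg (hhnn x hxI)
      rw [h1, h2, add_zero]
      have h3 : φ x ≤ h x := claim3 x hxI
      have h4 : q x ≤ h x := claim4 x hxI
      have h5 : φ (cl x) = φ x := by rw [hclid x hxI]
      simp only [hρdef, h5, hK]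
      nlinarith [mul_le_mul_of_nonneg_left h3 hc2nn, mul_le_mul_of_nonneg_left h4 hc3nn]
  intro x hx
  have hhb : h x ≤ (‖v 0‖ + ‖w 0‖) * Real.exp (K * b) := by
    have h1 := hgron x hx
    rw [gronwallBound_ε0, sub_zero] at h1
    have h2 : h x ≤ (‖v 0‖ + ‖w 0‖) * Real.exp (K * x) := (le_abs_self _).trans h1
    refine h2.trans ?_
    exact mul_le_mul_of_nonneg_left
      (Real.exp_le_exp.2 (mul_le_mul_of_nonneg_left hx.2 hKnn)) (hφ0 0)
  have h3 : ‖v x‖ + ‖w x‖ ≤ h x := claim3 x hx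
  have h2 : ‖u x‖ ≤ K1 / r * q x := claim2 x hx
  have h7 : K1 / r * q x ≤ K1 / r * h x :=
    mul_le_mul_of_nonneg_left (claim4 x hx) (by positivity)
  have h9 : (1 + K1 / r) * h x ≤ (1 + K1 / r) * ((‖v 0‖ + ‖w 0‖) * Real.exp (K * b)) :=
    mul_le_mul_of_nonneg_left hhb (by positivity)
  have h10 : (1 + K1 / r) * ((‖v 0‖ + ‖w 0‖) * Real.exp (K * b))
      = (1 + K1 / r) * Real.exp ((2 * K2 + 2 * K2 * K1 / r) * b) * (‖v 0‖ + ‖w 0‖) := by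
    rw [show K = 2 * K2 + 2 * K2 * K1 / r from rfl]; ring
  have h8 : h x + K1 / r * h x = (1 + K1 / r) * h x := by ring
  have h11 : (1 + K1 / r) * ((‖v 0‖ + ‖w 0‖) * Real.exp (K * b))
      = (1 + K1 / r) * Real.exp (K * b) * (‖v 0‖ + ‖w 0‖) := by ring
  calc ‖v x‖ + ‖w x‖ + ‖u x‖ ≤ h x + K1 / r * q x := add_le_add h3 h2
    _ ≤ h x + K1 / r * h x := add_le_add (le_refl _) h7
    _ = (1 + K1 / r) * h x := h8
    _ ≤ (1 + K1 / r) * ((‖v 0‖ + ‖w 0‖) * Real.exp (K * b)) := h9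
    _ = (1 + K1 / r) * Real.exp (K * b) * (‖v 0‖ + ‖w 0‖) := h11

open Complex Set MeasureTheory intervalIntegral

/-- Uniform `L^∞(-L,H)` bound of the first basis function `𝐔₁^{θ,ν}`, uniformly
over `θ` in a compact interval and `ν ∈ (0,1]` (Proposition 5.3 of the paper). -/
theorem first_basis_function_uniformly_bounded
    (L H r : ℝ) (hL : 0 < L) (hH : 0 < H) (hr : 0 < r)
    (α δ : ℝ → ℝ)
    (hα : ContDiffOn ℝ 2 α (Set.Ici (-L)))
    (hαbd : ∃ C, ∀ x, -L ≤ x → |α x| ≤ C)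
    (hα0 : α 0 = 0) (hα'0 : deriv α 0 < 0)
    (hαr : ∀ x ∈ Set.Icc (-L) H, r * |x| ≤ |α x|)
    (hδ : ContDiffOn ℝ 1 δ (Set.Ici (-L)))
    (hδbd : ∃ C, ∀ x, -L ≤ x → |δ x| ≤ C)
    (hδ0 : δ 0 ≠ 0)
    (θm θp : ℝ)
    -- the family (θ,ν) ↦ 𝐔₁^{θ,ν} of first basis functions
    (U₁ V₁ W₁ : ℝ → ℝ → ℝ → ℂ)
    (hsys : ∀ θ ∈ Set.Icc θm θp, ∀ ν ∈ Set.Ioc (0:ℝ) 1,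
      (∀ x, -L ≤ x → HasDerivAt (V₁ θ ν)
        (W₁ θ ν x + Complex.I * (θ : ℂ) * U₁ θ ν x) x) ∧
      (∀ x, -L ≤ x →
        Complex.I * (θ : ℂ) * W₁ θ ν x
          - ((α x : ℂ) + Complex.I * (ν : ℂ)) * U₁ θ ν x
          - Complex.I * (δ x : ℂ) * V₁ θ ν x = 0) ∧
      (∀ x, -L ≤ x → HasDerivAt (W₁ θ ν)
        (Complex.I * (δ x : ℂ) * U₁ θ ν x
          - ((α x : ℂ) + Complex.I * (ν : ℂ)) * V₁ θ ν x) x) ∧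
      V₁ θ ν 0 = Complex.I * (θ : ℂ) ∧ W₁ θ ν 0 = Complex.I * (δ 0 : ℂ)) :
    ∃ C > 0, ∀ θ ∈ Set.Icc θm θp, ∀ ν ∈ Set.Ioc (0:ℝ) 1, ∀ x ∈ Set.Ioo (-L) H,
      ‖U₁ θ ν x‖ + ‖V₁ θ ν x‖ + ‖W₁ θ ν x‖ ≤ C := by
  classical
  obtain ⟨Ca, hCa⟩ := hαbd
  obtain ⟨Cd, hCd⟩ := hδbd
  have hCa0 : 0 ≤ Ca := (abs_nonneg _).trans (hCa 0 (by linarith))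
  have hCd0 : 0 ≤ Cd := (abs_nonneg _).trans (hCd 0 (by linarith))
  set D : ℝ → ℝ := fun x => derivWithin δ (Set.Ici (-L)) x with hDdef
  have hDc : ContinuousOn D (Set.Ici (-L)) :=
    hδ.continuousOn_derivWithin (uniqueDiffOn_Ici _) le_rfl
  obtain ⟨Ce, hCe⟩ := (isCompact_Icc (a := -L) (b := H)).exists_bound_of_continuousOn
      (hDc.mono (fun x hx => hx.1))
  have hCe0 : 0 ≤ Ce := (norm_nonneg _).trans (hCe (-L) ⟨le_rfl, by linarith⟩)
  have hδd : ∀ x : ℝ, -L < x → HasDerivAt δ (D x) x := by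
    intro x hx
    have h1 : DifferentiableWithinAt ℝ δ (Set.Ici (-L)) x :=
      (hδ.differentiableOn one_ne_zero) x (le_of_lt hx)
    exact h1.hasDerivWithinAt.hasDerivAt (Ici_mem_nhds hx)
  set Cθ : ℝ := max |θm| |θp| with hCθdef
  have hCθ0 : 0 ≤ Cθ := le_trans (abs_nonneg _) (le_max_left _ _)
  have hθabs : ∀ θ ∈ Set.Icc θm θp, |θ| ≤ Cθ := by
    intro θ hθ
    rw [abs_le]
    constructor
    · linarith [neg_abs_le θm, le_max_left |θm| |θp|, hθ.1]
    · linarith [le_abs_self θp, le_max_right |θm| |θp|, hθ.2]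
  set K1 : ℝ := Ce + Cd + Cθ * (Ca + 1) with hK1def
  set K2 : ℝ := Ca + Cd + Cθ + 2 with hK2def
  have hK1nn : 0 ≤ K1 := by positivity
  have hK2nn : 0 ≤ K2 := by positivity
  set M : ℝ := max L H with hMdef
  have hM0 : 0 ≤ M := le_trans hL.le (le_max_left _ _)
  set C : ℝ := (1 + K1 / r) * Real.exp ((2 * K2 + 2 * K2 * K1 / r) * M) * (Cθ + Cd) + 1
    with hCdef
  have hfac1 : (1:ℝ) ≤ 1 + K1 / r := by
    have : 0 ≤ K1 / r := by positivity
    linarith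
  have hfac2 : (1:ℝ) ≤ Real.exp ((2 * K2 + 2 * K2 * K1 / r) * M) :=
    Real.one_le_exp (by positivity)
  refine ⟨C, by positivity, ?_⟩
  intro θ hθ ν hν x₀ hx₀
  obtain ⟨h1, h2, h3, hV0, hW0⟩ := hsys θ hθ ν hν
  set V := V₁ θ ν with hVdef
  set W := W₁ θ ν with hWdef
  set U := U₁ θ ν with hUdef
  set A : ℝ → ℂ := fun x => (α x : ℂ) + Complex.I * (ν:ℂ) with hA
  set Z : ℝ → ℂ := fun x => (δ x : ℂ) * V x - (θ:ℂ) * W x with hZ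
  set dv : ℝ → ℂ := fun x => W x + Complex.I * (θ:ℂ) * U x with hdv
  set dw : ℝ → ℂ := fun x => Complex.I * (δ x:ℂ) * U x - A x * V x with hdw
  set dz : ℝ → ℂ := fun x => (D x : ℂ) * V x + (δ x : ℂ) * W x + (θ:ℂ) * A x * V x with hdz
  have halg : ∀ x, -L ≤ x → A x * U x = -Complex.I * Z x := by
    intro x hx
    have h4 := h2 x hx
    simp only [hA, hZ]
    linear_combination -h4
  have hAnorm : ∀ x : ℝ, |α x| ≤ ‖A x‖ := by
    intro x
    have h4 : (A x).re = α x := by simp [hA]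
    calc |α x| = |(A x).re| := by rw [h4]
      _ ≤ ‖A x‖ := Complex.abs_re_le_norm _
      _ = ‖A x‖ := rfl
  have hAne : ∀ x : ℝ, A x ≠ 0 := by
    intro x hc
    have h5 : (A x).im = ν := by simp [hA]
    rw [hc] at h5
    simp only [Complex.zero_im] at h5
    exact absurd h5.symm (ne_of_gt hν.1)
  have hAub : ∀ x, -L ≤ x → ‖A x‖ ≤ Ca + 1 := by
    intro x hx
    calc ‖A x‖ ≤ ‖((α x : ℝ) : ℂ)‖ + ‖Complex.I * (ν:ℂ)‖ := norm_add_le _ _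
      _ = |α x| + |ν| := by
          rw [norm_mul, Complex.norm_I, one_mul, Complex.norm_real, Complex.norm_real,
            Real.norm_eq_abs, Real.norm_eq_abs]
      _ ≤ Ca + 1 := by
          have := hCa x hx
          have h6 : |ν| = ν := abs_of_pos hν.1
          linarith [hν.2, h6.le, this]
  have hZU : ∀ x, -L ≤ x → ‖A x‖ * ‖U x‖ = ‖Z x‖ := by
    intro x hx
    rw [← norm_mul, halg x hx, norm_mul, norm_neg, Complex.norm_I, one_mul]
  have hrxu : ∀ x ∈ Set.Icc (-L) H, r * |x| * ‖U x‖ ≤ ‖Z x‖ := by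
    intro x hx
    rw [← hZU x hx.1]
    exact mul_le_mul_of_nonneg_right ((hαr x hx).trans (hAnorm x)) (norm_nonneg _)
  have hZ0 : Z 0 = 0 := by
    simp only [hZ, hV0, hW0]
    ring
  have hU0 : U 0 = 0 := by
    have h5 := halg 0 (by linarith)
    rw [hZ0, mul_zero] at h5
    exact (mul_eq_zero.1 h5).resolve_left (hAne 0)
  -- continuity facts on Ici (-L)
  have hVcont : ContinuousOn V (Set.Ici (-L)) := fun x hx =>
    (h1 x hx).continuousAt.continuousWithinAt
  have hWcont : ContinuousOn W (Set.Ici (-L)) := fun x hx =>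
    (h3 x hx).continuousAt.continuousWithinAt
  have hαcont : ContinuousOn α (Set.Ici (-L)) := hα.continuousOn
  have hδcont : ContinuousOn δ (Set.Ici (-L)) := hδ.continuousOn
  have hδCcont : ContinuousOn (fun x => ((δ x : ℝ) : ℂ)) (Set.Ici (-L)) :=
    Complex.continuous_ofReal.comp_continuousOn hδcont
  have hAcont : ContinuousOn A (Set.Ici (-L)) :=
    (Complex.continuous_ofReal.comp_continuousOn hαcont).add continuousOn_const
  have hZcont : ContinuousOn Z (Set.Ici (-L)) :=
    (hδCcont.mul hVcont).sub (continuousOn_const.mul hWcont)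
  have hUcont : ContinuousOn U (Set.Ici (-L)) := by
    have heq : ∀ x ∈ Set.Ici (-L), U x = -Complex.I * Z x / A x := by
      intro x hx
      rw [eq_div_iff (hAne x)]
      linear_combination halg x hx
    exact ((continuousOn_const.mul hZcont).div hAcont fun x _ => hAne x).congr heq
  have hdvcont : ContinuousOn dv (Set.Ici (-L)) :=
    hWcont.add (continuousOn_const.mul hUcont)
  have hdwcont : ContinuousOn dw (Set.Ici (-L)) :=
    ((continuousOn_const.mul hδCcont).mul hUcont).sub (hAcont.mul hVcont)
  have hdzcont : ContinuousOn dz (Set.Ici (-L)) :=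
    (((Complex.continuous_ofReal.comp_continuousOn hDc).mul hVcont).add
      (hδCcont.mul hWcont)).add ((continuousOn_const.mul hAcont).mul hVcont)
  -- derivative of Z
  have hZd : ∀ x, -L < x → HasDerivAt Z (dz x) x := by
    intro x hx
    have hδx : HasDerivAt (fun y => ((δ y : ℝ) : ℂ)) ((D x : ℝ) : ℂ) x :=
      (hδd x hx).ofReal_comp
    have hVx := h1 x hx.le
    have hWx := h3 x hx.le
    have hder := (hδx.mul hVx).sub (hWx.const_mul (θ:ℂ))
    convert hder using 1
    · rfl
    · rfl
    simp only [hdz, hdv, hdw, hA]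
    ring
  -- pointwise norm bounds
  have hbd_dz : ∀ x, -L ≤ x → x ≤ H → ‖dz x‖ ≤ K1 * (‖V x‖ + ‖W x‖) := by
    intro x hx hxH
    have hD : |D x| ≤ Ce := by
      have := hCe x ⟨hx, hxH⟩
      rwa [Real.norm_eq_abs] at this
    have hd : |δ x| ≤ Cd := hCd x hx
    have hθ' : |θ| ≤ Cθ := hθabs θ hθ
    have hA' : ‖A x‖ ≤ Ca + 1 := hAub x hx
    have e1 : ‖((D x : ℝ) : ℂ) * V x‖ = |D x| * ‖V x‖ := by
      rw [norm_mul, Complex.norm_real, Real.norm_eq_abs]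
    have e2 : ‖((δ x : ℝ) : ℂ) * W x‖ = |δ x| * ‖W x‖ := by
      rw [norm_mul, Complex.norm_real, Real.norm_eq_abs]
    have e3 : ‖(θ:ℂ) * A x * V x‖ = |θ| * ‖A x‖ * ‖V x‖ := by
      rw [norm_mul, norm_mul, Complex.norm_real, Real.norm_eq_abs]
    calc ‖dz x‖ ≤ ‖((D x : ℝ) : ℂ) * V x + ((δ x : ℝ) : ℂ) * W x‖ + ‖(θ:ℂ) * A x * V x‖ :=
          norm_add_le _ _
      _ ≤ ‖((D x : ℝ) : ℂ) * V x‖ + ‖((δ x : ℝ) : ℂ) * W x‖ + ‖(θ:ℂ) * A x * V x‖ := by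
          linarith [norm_add_le (((D x : ℝ) : ℂ) * V x) (((δ x : ℝ) : ℂ) * W x)]
      _ ≤ K1 * (‖V x‖ + ‖W x‖) := by
          rw [e1, e2, e3]
          have nV := norm_nonneg (V x)
          have nW := norm_nonneg (W x)
          have hθA : |θ| * ‖A x‖ ≤ Cθ * (Ca + 1) := by
            have h7 : 0 ≤ |θ| := abs_nonneg _
            have h8 : 0 ≤ ‖A x‖ := norm_nonneg _
            nlinarith
          simp only [hK1def]
          have p1 := mul_le_mul_of_nonneg_right hD nV
          have p2 := mul_le_mul_of_nonneg_right hd nW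
          have p3 := mul_le_mul_of_nonneg_right hθA nV
          have p4 : 0 ≤ Ce * ‖W x‖ := mul_nonneg hCe0 nW
          have p5 : 0 ≤ Cd * ‖V x‖ := mul_nonneg hCd0 nV
          have p6 : 0 ≤ Cθ * (Ca + 1) * ‖W x‖ :=
            mul_nonneg (mul_nonneg hCθ0 (by linarith)) nW
          nlinarith [p1, p2, p3, p4, p5, p6]
  have hbd_dv : ∀ x, -L ≤ x → ‖dv x‖ ≤ K2 * (‖V x‖ + ‖W x‖) + K2 * ‖U x‖ := by
    intro x hx
    have hθ' : |θ| ≤ Cθ := hθabs θ hθ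
    have e1 : ‖Complex.I * (θ:ℂ) * U x‖ = |θ| * ‖U x‖ := by
      rw [norm_mul, norm_mul, Complex.norm_I, one_mul, Complex.norm_real, Real.norm_eq_abs]
    calc ‖dv x‖ ≤ ‖W x‖ + ‖Complex.I * (θ:ℂ) * U x‖ := norm_add_le _ _
      _ ≤ K2 * (‖V x‖ + ‖W x‖) + K2 * ‖U x‖ := by
          rw [e1]
          have nV := norm_nonneg (V x)
          have nW := norm_nonneg (W x)
          have nU := norm_nonneg (U x)
          simp only [hK2def]
          nlinarith [abs_nonneg θ]
  have hbd_dw : ∀ x, -L ≤ x → ‖dw x‖ ≤ K2 * (‖V x‖ + ‖W x‖) + K2 * ‖U x‖ := by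
    intro x hx
    have hd : |δ x| ≤ Cd := hCd x hx
    have hA' : ‖A x‖ ≤ Ca + 1 := hAub x hx
    have e1 : ‖Complex.I * (δ x:ℂ) * U x‖ = |δ x| * ‖U x‖ := by
      rw [norm_mul, norm_mul, Complex.norm_I, one_mul, Complex.norm_real, Real.norm_eq_abs]
    have e2 : ‖A x * V x‖ = ‖A x‖ * ‖V x‖ := norm_mul _ _
    calc ‖dw x‖ ≤ ‖Complex.I * (δ x:ℂ) * U x‖ + ‖A x * V x‖ := norm_sub_le _ _
      _ ≤ K2 * (‖V x‖ + ‖W x‖) + K2 * ‖U x‖ := by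
          rw [e1, e2]
          have nV := norm_nonneg (V x)
          have nW := norm_nonneg (W x)
          have nU := norm_nonneg (U x)
          simp only [hK2def]
          nlinarith [abs_nonneg (δ x), norm_nonneg (A x)]
  have hφ0bd : ‖V 0‖ + ‖W 0‖ ≤ Cθ + Cd := by
    rw [hV0, hW0]
    have e1 : ‖Complex.I * (θ:ℂ)‖ = |θ| := by
      rw [norm_mul, Complex.norm_I, one_mul, Complex.norm_real, Real.norm_eq_abs]
    have e2 : ‖Complex.I * ((δ 0 : ℝ):ℂ)‖ = |δ 0| := by
      rw [norm_mul, Complex.norm_I, one_mul, Complex.norm_real, Real.norm_eq_abs]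
    rw [e1, e2]
    exact add_le_add (hθabs θ hθ) (hCd 0 (by linarith))
  -- the key estimate via the core lemma, in direction σ = ±1
  have key : ∀ σ b : ℝ, (σ = 1 ∨ σ = -1) → 0 < b → b ≤ M →
      (∀ t ∈ Set.Icc (0:ℝ) b, -L < σ * t ∧ σ * t ≤ H) →
      ‖V (σ * b)‖ + ‖W (σ * b)‖ + ‖U (σ * b)‖ ≤ C - 1 := by
    intro σ b hσ hb hbM hmap
    have hσ1 : |σ| = 1 := by rcases hσ with h | h <;> rw [h] <;> norm_num
    have hmem : ∀ t ∈ Set.Icc (0:ℝ) b, σ * t ∈ Set.Icc (-L) H := fun t ht =>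
      ⟨(hmap t ht).1.le, (hmap t ht).2⟩
    have hmem' : ∀ t ∈ Set.Icc (0:ℝ) b, -L < σ * t := fun t ht => (hmap t ht).1
    have hnegmap : MapsTo (fun t : ℝ => σ * t) (Set.Icc 0 b) (Set.Ici (-L)) :=
      fun t ht => (hmem t ht).1
    have hσd : ∀ t : ℝ, HasDerivAt (fun s : ℝ => σ * s) σ t := by
      intro t
      simpa using (hasDerivAt_id t).const_mul σ
    have hcσ : Continuous (fun t : ℝ => σ * t) := continuous_const.mul continuous_id
    -- reflected/scaled functions
    have hcore := core_gronwall (b := b) (r := r) (K1 := K1) (K2 := K2) hb hr hK1nn hK2nn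
      (v := fun t => V (σ * t)) (w := fun t => W (σ * t)) (u := fun t => U (σ * t))
      (z := fun t => Z (σ * t))
      (dv := fun t => σ • dv (σ * t)) (dw := fun t => σ • dw (σ * t))
      (dz := fun t => σ • dz (σ * t))
      (fun t ht => ((h1 (σ * t) (hmem t ht).1).scomp t (hσd t)))
      (fun t ht => ((h3 (σ * t) (hmem t ht).1).scomp t (hσd t)))
      (fun t ht => ((hZd (σ * t) (hmem' t ht)).scomp t (hσd t)))
      ((hdvcont.comp hcσ.continuousOn hnegmap).const_smul σ)
      ((hdwcont.comp hcσ.continuousOn hnegmap).const_smul σ)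
      ((hdzcont.comp hcσ.continuousOn hnegmap).const_smul σ)
      (by simpa using hZ0)
      (by simpa using hU0)
      (fun t ht => by
        rw [norm_smul, Real.norm_eq_abs, hσ1, one_mul]
        exact hbd_dz (σ * t) (hmem t ht).1 (hmem t ht).2)
      (fun t ht => by
        have h5 := hrxu (σ * t) (hmem t ht)
        have h6 : |σ * t| = t := by
          rw [_root_.abs_mul, hσ1, one_mul, _root_.abs_of_nonneg ht.1]
        rwa [h6] at h5)
      (fun t ht => by
        rw [norm_smul, Real.norm_eq_abs, hσ1, one_mul]
        exact hbd_dv (σ * t) (hmem t ht).1)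
      (fun t ht => by
        rw [norm_smul, Real.norm_eq_abs, hσ1, one_mul]
        exact hbd_dw (σ * t) (hmem t ht).1)
    have h7 := hcore b ⟨hb.le, le_rfl⟩
    have h8 : ‖V (σ * 0)‖ + ‖W (σ * 0)‖ ≤ Cθ + Cd := by
      rw [mul_zero]
      exact hφ0bd
    have h9 : (1 + K1 / r) * Real.exp ((2 * K2 + 2 * K2 * K1 / r) * b)
        * (‖V (σ * 0)‖ + ‖W (σ * 0)‖)
        ≤ (1 + K1 / r) * Real.exp ((2 * K2 + 2 * K2 * K1 / r) * M) * (Cθ + Cd) := by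
      have hexp : Real.exp ((2 * K2 + 2 * K2 * K1 / r) * b)
          ≤ Real.exp ((2 * K2 + 2 * K2 * K1 / r) * M) :=
        Real.exp_le_exp.2 (mul_le_mul_of_nonneg_left hbM (by positivity))
      have hn1 : (0:ℝ) ≤ 1 + K1 / r := by positivity
      have hn2 : 0 ≤ ‖V (σ * 0)‖ + ‖W (σ * 0)‖ :=
        add_nonneg (norm_nonneg _) (norm_nonneg _)
      have hn3 : (0:ℝ) ≤ Real.exp ((2 * K2 + 2 * K2 * K1 / r) * b) := (Real.exp_pos _).le
      have hn5 : (0:ℝ) ≤ Cθ + Cd := add_nonneg hCθ0 hCd0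
      calc (1 + K1 / r) * Real.exp ((2 * K2 + 2 * K2 * K1 / r) * b)
            * (‖V (σ * 0)‖ + ‖W (σ * 0)‖)
          ≤ (1 + K1 / r) * Real.exp ((2 * K2 + 2 * K2 * K1 / r) * b) * (Cθ + Cd) :=
            mul_le_mul_of_nonneg_left h8 (by positivity)
        _ ≤ (1 + K1 / r) * Real.exp ((2 * K2 + 2 * K2 * K1 / r) * M) * (Cθ + Cd) :=
            mul_le_mul_of_nonneg_right (mul_le_mul_of_nonneg_left hexp hn1) hn5
    have h10 : C - 1 = (1 + K1 / r) * Real.exp ((2 * K2 + 2 * K2 * K1 / r) * M)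
        * (Cθ + Cd) := by
      simp only [hCdef]; ring
    rw [h10]
    exact h7.trans h9
  -- conclude, splitting on the sign of x₀
  have hgoal : ‖V x₀‖ + ‖W x₀‖ + ‖U x₀‖ ≤ C := by
    rcases lt_trichotomy x₀ 0 with hneg | hzero | hpos
    · have hb : 0 < -x₀ := by linarith
      have hbM : -x₀ ≤ M := by
        have : -x₀ < L := by linarith [hx₀.1]
        linarith [le_max_left L H]
      have hmap : ∀ t ∈ Set.Icc (0:ℝ) (-x₀), -L < (-1 : ℝ) * t ∧ (-1 : ℝ) * t ≤ H := by
        intro t ht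
        constructor
        · have := ht.2
          have := hx₀.1
          nlinarith [ht.1]
        · nlinarith [ht.1, hH.le]
      have h5 := key (-1) (-x₀) (Or.inr rfl) hb hbM hmap
      rw [show (-1 : ℝ) * -x₀ = x₀ by ring] at h5
      linarith
    · rw [hzero, hU0]
      rw [norm_zero]
      have h6 : Cθ + Cd ≤ C - 1 := by
        have h7 : 0 ≤ Cθ + Cd := by positivity
        have h8 : (1:ℝ) ≤ (1 + K1 / r) * Real.exp ((2 * K2 + 2 * K2 * K1 / r) * M) := by
          nlinarith
        simp only [hCdef]
        nlinarith
      linarith [hφ0bd]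
    · have hbM : x₀ ≤ M := le_trans hx₀.2.le (le_max_right L H)
      have hmap : ∀ t ∈ Set.Icc (0:ℝ) x₀, -L < (1 : ℝ) * t ∧ (1 : ℝ) * t ≤ H := by
        intro t ht
        constructor
        · rw [one_mul]; linarith [ht.1]
        · rw [one_mul]; linarith [ht.2, hx₀.2.le]
      have h5 := key 1 x₀ (Or.inl rfl) hpos hbM hmap
      rw [one_mul] at h5
      linarith
  linarith
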